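/- (Corollary on marginal posterior concentration.) Under the hypotheses of the marginal concentration theorem — namely: A ⊆ ℝ^q measurable, f : ℝ^p × A → ℝ with e^f integrable on ℝ^p × A and per-slice integrable with positive integrals; θ* ∈ ℝ^p; maps η ↦ θ_η; symmetric positive definite matrices D, D_η with C₀^{-2} D² ⪯ D_η² ⪯ C₀² D² (C₀ ≥ 1); radii r_η ≤ C₀ r*; per-slice tails ∫_{{‖D_η(u−θ_η)‖ > ν^{-1} r_η}} e^{f(u,η)} du ≤ e^{-x} ∫ e^{f(u,η)} du for 0 < ν ≤ 1 — assume in addition that sup_{η ∈ A} ‖D (θ_η − θ*)‖ ≤ C_bias · r* for a constant C_bias ≥ 0. Then ∫∫_{{(u,η) : ‖D (u − θ*)‖ > (C₀² ν^{-1} + C_bias) r*}} e^{f(u,η)} du dη ≤ e^{-x} ∫∫_{ℝ^p × A} e^{f(u,η)} du dη. -/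

import Mathlib

open MeasureTheory

lemma norm_toEuclideanLin_sq {n : ℕ} (M : Matrix (Fin n) (Fin n) ℝ) (hM : M.IsHermitian)
    (v : EuclideanSpace ℝ (Fin n)) :
    ‖Matrix.toEuclideanLin M v‖ ^ 2 =
      dotProduct (WithLp.equiv 2 (Fin n → ℝ) v)
        ((M ^ 2).mulVec (WithLp.equiv 2 (Fin n → ℝ) v)) := by
  set w := WithLp.equiv 2 (Fin n → ℝ) v
  have h1 : ‖Matrix.toEuclideanLin M v‖ ^ 2
      = inner ℝ (Matrix.toEuclideanLin M v) (Matrix.toEuclideanLin M v) :=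
    (real_inner_self_eq_norm_sq _).symm
  rw [h1, EuclideanSpace.inner_eq_star_dotProduct]
  have h2 : (Matrix.toEuclideanLin M v).ofLp = M.mulVec w := rfl
  rw [h2]
  have hMT : M.transpose = M := by
    have := hM.eq
    rwa [Matrix.conjTranspose_eq_transpose_of_trivial] at this
  rw [star_trivial, pow_two, ← Matrix.mulVec_mulVec, Matrix.dotProduct_mulVec,
    ← Matrix.mulVec_transpose, hMT, dotProduct_comm]

lemma norm_toEuclideanLin_le {n : ℕ} (M N : Matrix (Fin n) (Fin n) ℝ)
    (hM : M.IsHermitian) (hN : N.IsHermitian) (c : ℝ) (hc : 0 ≤ c)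
    (h : (N ^ 2 - c ^ 2 • M ^ 2).PosSemidef) (v : EuclideanSpace ℝ (Fin n)) :
    c * ‖Matrix.toEuclideanLin M v‖ ≤ ‖Matrix.toEuclideanLin N v‖ := by
  set w := WithLp.equiv 2 (Fin n → ℝ) v
  have h2 := h.dotProduct_mulVec_nonneg w
  rw [star_trivial, Matrix.sub_mulVec, Matrix.smul_mulVec, dotProduct_sub,
    dotProduct_smul] at h2
  have key : (c * ‖Matrix.toEuclideanLin M v‖) ^ 2 ≤ ‖Matrix.toEuclideanLin N v‖ ^ 2 := by
    rw [mul_pow, norm_toEuclideanLin_sq M hM v, norm_toEuclideanLin_sq N hN v]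
    have h3 : c ^ 2 • dotProduct w ((M ^ 2).mulVec w)
        ≤ dotProduct w ((N ^ 2).mulVec w) := by linarith [h2]
    simpa [smul_eq_mul, w] using h3
  nlinarith [mul_nonneg hc (norm_nonneg (Matrix.toEuclideanLin M v)),
    norm_nonneg (Matrix.toEuclideanLin N v), key]


/-- Corollary on marginal posterior concentration, bias bounded by
`C_bias · r*`. -/
theorem marginal_posterior_concentration_bias_corollary
    (p q : ℕ)
    (A : Set (EuclideanSpace ℝ (Fin q))) (hA : MeasurableSet A)
    (f : EuclideanSpace ℝ (Fin p) → EuclideanSpace ℝ (Fin q) → ℝ)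
    (hfm : Measurable (fun z : EuclideanSpace ℝ (Fin p) × EuclideanSpace ℝ (Fin q) =>
      f z.1 z.2))
    (θs : EuclideanSpace ℝ (Fin p))
    (θη : EuclideanSpace ℝ (Fin q) → EuclideanSpace ℝ (Fin p))
    (D : Matrix (Fin p) (Fin p) ℝ)
    (Dη : EuclideanSpace ℝ (Fin q) → Matrix (Fin p) (Fin p) ℝ)
    (rη : EuclideanSpace ℝ (Fin q) → ℝ) (rs x ν C₀ Cbias : ℝ)
    (hD : D.PosDef) (hDη : ∀ η ∈ A, (Dη η).PosDef)
    (hrη : ∀ η ∈ A, 0 < rη η) (hrs : 0 < rs)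
    (hν0 : 0 < ν) (hν1 : ν ≤ 1) (hC₀ : 1 ≤ C₀) (hCbias : 0 ≤ Cbias)
    -- e^f is integrable over ℝ^p × A
    (hint : IntegrableOn
      (fun z : EuclideanSpace ℝ (Fin p) × EuclideanSpace ℝ (Fin q) => Real.exp (f z.1 z.2))
      ((Set.univ : Set (EuclideanSpace ℝ (Fin p))) ×ˢ A))
    -- per-slice integrability with positive integral
    (hslice_int : ∀ η ∈ A, Integrable (fun u => Real.exp (f u η)))
    (hslice_pos : ∀ η ∈ A, 0 < ∫ u, Real.exp (f u η))
    -- per-slice tail bound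
    (htail : ∀ η ∈ A,
      (∫ u in {u : EuclideanSpace ℝ (Fin p) |
          ‖Matrix.toEuclideanLin (Dη η) (u - θη η)‖ > ν⁻¹ * rη η}, Real.exp (f u η))
        ≤ Real.exp (-x) * ∫ u, Real.exp (f u η))
    -- Loewner sandwich C₀⁻² D² ⪯ D_η² ⪯ C₀² D²
    (hsand : ∀ η ∈ A, ((Dη η) ^ 2 - C₀⁻¹ ^ 2 • D ^ 2).PosSemidef ∧
        (C₀ ^ 2 • D ^ 2 - (Dη η) ^ 2).PosSemidef)
    -- radii comparison
    (hr : ∀ η ∈ A, rη η ≤ C₀ * rs)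
    -- additional hypothesis: bias bounded by C_bias · r*
    (hbias : ∀ η ∈ A, ‖Matrix.toEuclideanLin D (θη η - θs)‖ ≤ Cbias * rs) :
    (∫ z in {z : EuclideanSpace ℝ (Fin p) × EuclideanSpace ℝ (Fin q) |
        ‖Matrix.toEuclideanLin D (z.1 - θs)‖ > (C₀ ^ 2 * ν⁻¹ + Cbias) * rs ∧ z.2 ∈ A},
      Real.exp (f z.1 z.2))
      ≤ Real.exp (-x) *
        ∫ z in (Set.univ : Set (EuclideanSpace ℝ (Fin p))) ×ˢ A, Real.exp (f z.1 z.2) := by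
  have hC₀0 : (0:ℝ) < C₀ := lt_of_lt_of_le one_pos hC₀
  set B : Set (EuclideanSpace ℝ (Fin p)) :=
    {u | ‖Matrix.toEuclideanLin D (u - θs)‖ > (C₀ ^ 2 * ν⁻¹ + Cbias) * rs} with hB
  set g : EuclideanSpace ℝ (Fin p) × EuclideanSpace ℝ (Fin q) → ℝ :=
    fun z => Real.exp (f z.1 z.2) with hg
  -- subset claim
  have hBT : ∀ η ∈ A, B ⊆ {u : EuclideanSpace ℝ (Fin p) |
      ‖Matrix.toEuclideanLin (Dη η) (u - θη η)‖ > ν⁻¹ * rη η} := by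
    intro η hη u hu
    by_contra hcon
    simp only [Set.mem_setOf_eq, not_lt] at hcon
    have hcmp := norm_toEuclideanLin_le D (Dη η) hD.1 (hDη η hη).1 C₀⁻¹ (by positivity)
      (hsand η hη).1 (u - θη η)
    have h1 : ‖Matrix.toEuclideanLin D (u - θη η)‖ ≤ C₀ * (ν⁻¹ * rη η) := by
      have h1' := mul_le_mul_of_nonneg_left (hcmp.trans hcon) (le_of_lt hC₀0)
      rw [← mul_assoc, mul_inv_cancel₀ (ne_of_gt hC₀0), one_mul] at h1'
      exact h1'
    have hνi : (0:ℝ) < ν⁻¹ := inv_pos.mpr hν0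
    have h2 : C₀ * (ν⁻¹ * rη η) ≤ C₀ ^ 2 * ν⁻¹ * rs := by
      have hr' := hr η hη
      have hm := mul_le_mul_of_nonneg_left hr' (mul_pos hC₀0 hνi).le
      nlinarith [hm]
    have htri : ‖Matrix.toEuclideanLin D (u - θs)‖
        ≤ ‖Matrix.toEuclideanLin D (u - θη η)‖ + ‖Matrix.toEuclideanLin D (θη η - θs)‖ := by
      have hdec : (u - θs) = (u - θη η) + (θη η - θs) := by abel
      rw [hdec, map_add]
      exact norm_add_le _ _
    have hb := hbias η hη
    have hfin : ‖Matrix.toEuclideanLin D (u - θs)‖ ≤ (C₀ ^ 2 * ν⁻¹ + Cbias) * rs := by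
      have : (C₀ ^ 2 * ν⁻¹ + Cbias) * rs = C₀ ^ 2 * ν⁻¹ * rs + Cbias * rs := by ring
      rw [this]
      linarith
    exact not_lt.mpr hfin hu
  -- the set is a product
  have hSeq : {z : EuclideanSpace ℝ (Fin p) × EuclideanSpace ℝ (Fin q) |
      ‖Matrix.toEuclideanLin D (z.1 - θs)‖ > (C₀ ^ 2 * ν⁻¹ + Cbias) * rs ∧ z.2 ∈ A}
      = B ×ˢ A := rfl
  rw [hSeq]
  have hvol : (volume : Measure (EuclideanSpace ℝ (Fin p) × EuclideanSpace ℝ (Fin q)))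
      = (volume : Measure (EuclideanSpace ℝ (Fin p))).prod volume := Measure.volume_eq_prod _ _
  -- integrability facts
  have hintA : Integrable g
      ((volume : Measure (EuclideanSpace ℝ (Fin p))).prod
        ((volume : Measure (EuclideanSpace ℝ (Fin q))).restrict A)) := by
    have h := hint
    rw [IntegrableOn, hvol, ← Measure.prod_restrict, Measure.restrict_univ] at h
    exact h
  have hintBA : Integrable g
      (((volume : Measure (EuclideanSpace ℝ (Fin p))).restrict B).prod
        ((volume : Measure (EuclideanSpace ℝ (Fin q))).restrict A)) := by
    have h : IntegrableOn g (B ×ˢ A) volume := by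
      apply hint.mono_set
      exact Set.prod_mono (Set.subset_univ _) le_rfl
    rw [IntegrableOn, hvol, ← Measure.prod_restrict] at h
    exact h
  have hLHS : (∫ z in B ×ˢ A, g z) = ∫ η in A, ∫ u in B, Real.exp (f u η) := by
    rw [hvol, ← Measure.prod_restrict]
    exact integral_prod_symm g hintBA
  have hRHS : (∫ z in (Set.univ : Set (EuclideanSpace ℝ (Fin p))) ×ˢ A, g z)
      = ∫ η in A, ∫ u, Real.exp (f u η) := by
    rw [hvol, ← Measure.prod_restrict, Measure.restrict_univ]
    exact integral_prod_symm g hintA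
  rw [hLHS]
  have hmono : (∫ η in A, ∫ u in B, Real.exp (f u η))
      ≤ ∫ η in A, Real.exp (-x) * ∫ u, Real.exp (f u η) := by
    apply integral_mono_of_nonneg
    · exact ae_of_all _ fun η => integral_nonneg fun u => (Real.exp_pos _).le
    · exact (hintA.integral_prod_right).const_mul _
    · refine (ae_restrict_iff' hA).mpr (ae_of_all _ fun η hη => ?_)
      have hsub : (∫ u in B, Real.exp (f u η))
          ≤ ∫ u in {u : EuclideanSpace ℝ (Fin p) |
              ‖Matrix.toEuclideanLin (Dη η) (u - θη η)‖ > ν⁻¹ * rη η}, Real.exp (f u η) := by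
        apply setIntegral_mono_set
        · exact (hslice_int η hη).integrableOn
        · exact ae_of_all _ fun u => (Real.exp_pos _).le
        · exact HasSubset.Subset.eventuallyLE (hBT η hη)
      exact hsub.trans (htail η hη)
  calc (∫ η in A, ∫ u in B, Real.exp (f u η))
      ≤ ∫ η in A, Real.exp (-x) * ∫ u, Real.exp (f u η) := hmono
    _ = Real.exp (-x) * ∫ η in A, ∫ u, Real.exp (f u η) := integral_const_mul _ _
    _ = Real.exp (-x) * ∫ z in (Set.univ : Set (EuclideanSpace ℝ (Fin p))) ×ˢ A, g z := by
        rw [hRHS]
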